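/- Let X ⊆ ℝ^m and Y ⊆ ℝ^n be nonempty compact convex sets and let f : ℝ^n × ℝ^m → ℝ be convex and differentiable on Y × X. Define 𝒬(x) = inf_{y ∈ Y} f(y, x). Fix x̄ ∈ X and ε ≥ 0 and assume: (H3) f(·, x̄) is strongly convex on Y with constant α(x̄) > 0 with respect to ‖·‖₂; (H4) there is M₁(x̄) ≥ 0 with ‖∇_x f(y₂, x̄) − ∇_x f(y₁, x̄)‖₂ ≤ M₁(x̄)‖y₂ − y₁‖₂ for all y₁, y₂ ∈ Y. Let ŷ ∈ Y satisfy f(ŷ, x̄) ≤ 𝒬(x̄) + ε and set η(ε, x̄) = ε + M₁(x̄) · Diam(X) · sqrt(2ε/α(x̄)), where Diam(X) = max_{x₁, x₂ ∈ X} ‖x₂ − x₁‖₂. Then the affine function C(x) = f(ŷ, x̄) − η(ε, x̄) + ⟨∇_x f(ŷ, x̄), x − x̄⟩ satisfies 𝒬(x) ≥ C(x) for every x ∈ X, and 𝒬(x̄) − C(x̄) ≤ η(ε, x̄). -/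

import Mathlib

open scoped RealInnerProductSpace Matrix
noncomputable section

/-- `ℝ^k` with the Euclidean norm. -/
abbrev E (k : ℕ) := EuclideanSpace ℝ (Fin k)

/-- The value function `𝒬(x) = inf_{y ∈ Y} f(y, x)` (as an extended real). -/
def Qfix {n m : ℕ} (Y : Set (E n)) (f : E n × E m → ℝ) (x : E m) : EReal :=
  ⨅ (y : E n) (_ : y ∈ Y), ((f (y, x) : ℝ) : EReal)

open Filter Set Topology

/-- Pass to the limit `t → 0⁺` in a linear bound. -/
lemma le_of_forall_Ioo {a b c : ℝ} (h : ∀ t ∈ Set.Ioo (0:ℝ) 1, a ≤ b + t * c) : a ≤ b := by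
  have ht : Tendsto (fun t : ℝ => b + t * c) (𝓝[>] (0:ℝ)) (𝓝 (b + 0 * c)) :=
    ((continuous_const.add (continuous_id.mul continuous_const)).tendsto 0).mono_left
      nhdsWithin_le_nhds
  rw [zero_mul, add_zero] at ht
  exact ge_of_tendsto ht (Filter.eventually_of_mem (Ioo_mem_nhdsGT one_pos) h)

/-- Subgradient inequality for a differentiable convex function. -/
lemma convexOn_fderiv_le {G : Type*} [NormedAddCommGroup G] [NormedSpace ℝ G]
    {s : Set G} {f : G → ℝ} (hf : ConvexOn ℝ s f) {p q : G} (hp : p ∈ s) (hq : q ∈ s)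
    (hd : DifferentiableAt ℝ f p) :
    f p + fderiv ℝ f p (q - p) ≤ f q := by
  set φ : ℝ → ℝ := fun t => f (p + t • (q - p)) with hφdef
  have hline : HasDerivAt (fun t : ℝ => p + t • (q - p)) (q - p) 0 := by
    simpa using ((hasDerivAt_id (0:ℝ)).smul_const (q - p)).const_add p
  have hd' : HasFDerivAt f (fderiv ℝ f p) (p + (0:ℝ) • (q - p)) := by
    simpa using hd.hasFDerivAt
  have hφ : HasDerivAt φ (fderiv ℝ f p (q - p)) 0 := hd'.comp_hasDerivAt 0 hline
  have hslope : ∀ t ∈ Set.Ioo (0:ℝ) 1, slope φ 0 t ≤ f q - f p := by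
    intro t ht
    have hseg : p + t • (q - p) = (1 - t) • p + t • q := by
      rw [smul_sub, sub_smul, one_smul]; abel
    have hcv := hf.2 hp hq (by linarith [ht.2] : (0:ℝ) ≤ 1 - t) ht.1.le (by ring)
    have hφt : φ t ≤ (1 - t) * f p + t * f q := by
      rw [hφdef]; simp only [hseg]; simpa [smul_eq_mul] using hcv
    have hφ0 : φ 0 = f p := by simp [hφdef]
    rw [slope_def_field, hφ0, sub_zero, div_le_iff₀ ht.1]
    nlinarith [ht.1]
  have htend : Tendsto (slope φ 0) (𝓝[>] (0:ℝ)) (𝓝 (fderiv ℝ f p (q - p))) :=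
    (hasDerivAt_iff_tendsto_slope.mp hφ).mono_left
      (nhdsWithin_mono 0 (fun t ht => Set.mem_compl_singleton_iff.mpr (ne_of_gt ht)))
  have := le_of_tendsto htend (Filter.eventually_of_mem (Ioo_mem_nhdsGT one_pos) hslope)
  linarith

/-- Partial gradient in the first variable vs full Fréchet derivative. -/
lemma inner_grad_fst {n m : ℕ} (f : E n × E m → ℝ) (y : E n) (x : E m)
    (hd : DifferentiableAt ℝ f (y, x)) (v : E n) :
    ⟪gradient (fun y' => f (y', x)) y, v⟫ = fderiv ℝ f (y, x) (v, 0) := by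
  have h1 : HasFDerivAt (fun y' : E n => (y', x))
      ((ContinuousLinearMap.id ℝ (E n)).prod (0 : E n →L[ℝ] E m)) y :=
    HasFDerivAt.prodMk (hasFDerivAt_id y) (hasFDerivAt_const x y)
  have h2 : HasFDerivAt (fun y' : E n => f (y', x))
      ((fderiv ℝ f (y, x)).comp ((ContinuousLinearMap.id ℝ (E n)).prod (0 : E n →L[ℝ] E m))) y :=
    hd.hasFDerivAt.comp y h1
  rw [show gradient (fun y' => f (y', x)) y
      = (InnerProductSpace.toDual ℝ (E n)).symm (fderiv ℝ (fun y' => f (y', x)) y) from rfl,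
    InnerProductSpace.toDual_symm_apply, h2.fderiv]
  simp

/-- Partial gradient in the second variable vs full Fréchet derivative. -/
lemma inner_grad_snd {n m : ℕ} (f : E n × E m → ℝ) (y : E n) (x : E m)
    (hd : DifferentiableAt ℝ f (y, x)) (w : E m) :
    ⟪gradient (fun x' => f (y, x')) x, w⟫ = fderiv ℝ f (y, x) (0, w) := by
  have h1 : HasFDerivAt (fun x' : E m => (y, x'))
      ((0 : E m →L[ℝ] E n).prod (ContinuousLinearMap.id ℝ (E m))) x :=
    HasFDerivAt.prodMk (hasFDerivAt_const y x) (hasFDerivAt_id x)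
  have h2 : HasFDerivAt (fun x' : E m => f (y, x'))
      ((fderiv ℝ f (y, x)).comp ((0 : E m →L[ℝ] E n).prod (ContinuousLinearMap.id ℝ (E m)))) x :=
    hd.hasFDerivAt.comp x h1
  rw [show gradient (fun x' => f (y, x')) x
      = (InnerProductSpace.toDual ℝ (E m)).symm (fderiv ℝ (fun x' => f (y, x')) x) from rfl,
    InnerProductSpace.toDual_symm_apply, h2.fderiv]
  simp

set_option maxHeartbeats 2000000 in
/-- Inexact cut with fixed feasible set under strong convexity (H3) and Lipschitz dependence of
`∇_x f` on `y` (H4): with `η(ε, x̄) = ε + M₁(x̄)·Diam(X)·√(2ε/α(x̄))`, the affine function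
`C(x) = f(ŷ, x̄) − η(ε, x̄) + ⟨∇_x f(ŷ, x̄), x − x̄⟩` satisfies `𝒬(x) ≥ C(x)` on `X` and
`𝒬(x̄) − C(x̄) ≤ η(ε, x̄)`. -/
theorem inexact_cut_fixed_feasible_set_strongly_convex
    {n m : ℕ} (X : Set (E m)) (Y : Set (E n))
    (hXne : X.Nonempty) (hXcp : IsCompact X) (hXcv : Convex ℝ X)
    (hYne : Y.Nonempty) (hYcp : IsCompact Y) (hYcv : Convex ℝ Y)
    (f : E n × E m → ℝ)
    (hconv : ConvexOn ℝ (Y ×ˢ X) f)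
    (hdiff : ∀ pt ∈ Y ×ˢ X, DifferentiableAt ℝ f pt)
    (xb : E m) (hxb : xb ∈ X)
    (ε : ℝ) (hε : 0 ≤ ε)
    -- (H3): strong convexity of f(·, x̄) on Y with constant α(x̄) > 0
    (α : ℝ) (hα : 0 < α)
    (hsc : ∀ y₁ ∈ Y, ∀ y₂ ∈ Y,
      f (y₁, xb) + ⟪gradient (fun y => f (y, xb)) y₁, y₂ - y₁⟫ + α / 2 * ‖y₂ - y₁‖ ^ 2
        ≤ f (y₂, xb))
    -- (H4): Lipschitz dependence of ∇ₓf(y, x̄) on y, with constant M₁(x̄) ≥ 0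
    (M₁ : ℝ) (hM₁ : 0 ≤ M₁)
    (hlip : ∀ y₁ ∈ Y, ∀ y₂ ∈ Y,
      ‖gradient (fun x => f (y₂, x)) xb - gradient (fun x => f (y₁, x)) xb‖
        ≤ M₁ * ‖y₂ - y₁‖)
    -- Diam(X)
    (D : ℝ) (hD : IsGreatest ((fun pr : E m × E m => ‖pr.2 - pr.1‖) '' (X ×ˢ X)) D)
    -- ε-optimal solution
    (yh : E n) (hyh : yh ∈ Y)
    (hepsopt : ((f (yh, xb) : ℝ) : EReal) ≤ Qfix Y f xb + (ε : EReal)) :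
    (∀ x ∈ X,
      ((f (yh, xb) - (ε + M₁ * D * Real.sqrt (2 * ε / α))
          + ⟪gradient (fun x' => f (yh, x')) xb, x - xb⟫ : ℝ) : EReal)
        ≤ Qfix Y f x) ∧
    Qfix Y f xb ≤
      ((f (yh, xb) - (ε + M₁ * D * Real.sqrt (2 * ε / α))
          + ⟪gradient (fun x' => f (yh, x')) xb, xb - xb⟫
          + (ε + M₁ * D * Real.sqrt (2 * ε / α)) : ℝ) : EReal) := by
  -- a minimizer of f(·, xb) on Y
  have hcont : ContinuousOn (fun y => f (y, xb)) Y := by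
    intro y hy
    have hc2 : HasFDerivAt (fun y' : E n => f (y', xb))
        ((fderiv ℝ f (y, xb)).comp
          ((ContinuousLinearMap.id ℝ (E n)).prod (0 : E n →L[ℝ] E m))) y :=
      (hdiff (y, xb) ⟨hy, hxb⟩).hasFDerivAt.comp y
        (HasFDerivAt.prodMk (hasFDerivAt_id y) (hasFDerivAt_const xb y))
    exact hc2.differentiableAt.continuousAt.continuousWithinAt
  obtain ⟨yb, hybY, hmin⟩ := hYcp.exists_isMinOn hYne hcont
  have hminr : ∀ y ∈ Y, f (yb, xb) ≤ f (y, xb) := fun y hy => isMinOn_iff.mp hmin y hy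
  have hQ : Qfix Y f xb = ((f (yb, xb) : ℝ) : EReal) := by
    refine le_antisymm (iInf₂_le yb hybY) (le_iInf₂ fun y hy => ?_)
    exact EReal.coe_le_coe_iff.mpr (hminr y hy)
  have hfh : f (yh, xb) ≤ f (yb, xb) + ε := by
    have h := hepsopt
    rw [hQ, ← EReal.coe_add] at h
    exact EReal.coe_le_coe_iff.mp h
  -- distance between yh and the minimizer
  have hsq : α / 2 * ‖yh - yb‖ ^ 2 ≤ f (yh, xb) - f (yb, xb) := by
    apply le_of_forall_Ioo (c := α / 2 * ‖yh - yb‖ ^ 2)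
    intro t ht
    have hzY : (1 - t) • yb + t • yh ∈ Y :=
      hYcv hybY hyh (by linarith [ht.2]) ht.1.le (by ring)
    set z := (1 - t) • yb + t • yh with hzdef
    have e1 : yb - z = -(t • (yh - yb)) := by rw [hzdef]; module
    have e2 : yh - z = (1 - t) • (yh - yb) := by rw [hzdef]; module
    have s1 := hsc z hzY yb hybY
    have s2 := hsc z hzY yh hyh
    rw [e1, inner_neg_right, real_inner_smul_right] at s1
    rw [e2, real_inner_smul_right] at s2
    have n1 : ‖-(t • (yh - yb))‖ = t * ‖yh - yb‖ := by
      rw [norm_neg, norm_smul, Real.norm_eq_abs, abs_of_pos ht.1]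
    have n2 : ‖(1 - t) • (yh - yb)‖ = (1 - t) * ‖yh - yb‖ := by
      rw [norm_smul, Real.norm_eq_abs, abs_of_pos (by linarith [ht.2])]
    rw [n1] at s1
    rw [n2] at s2
    have hm := hminr z hzY
    have hIt : t * (α / 2 * t * ‖yh - yb‖ ^ 2)
        ≤ t * ⟪gradient (fun y => f (y, xb)) z, yh - yb⟫ := by nlinarith [s1, hm]
    have hI : α / 2 * t * ‖yh - yb‖ ^ 2
        ≤ ⟪gradient (fun y => f (y, xb)) z, yh - yb⟫ :=
      le_of_mul_le_mul_left hIt ht.1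
    nlinarith [mul_le_mul_of_nonneg_left hI (by linarith [ht.2] : (0:ℝ) ≤ 1 - t), s2, hm]
  have hdist : ‖yb - yh‖ ≤ Real.sqrt (2 * ε / α) := by
    rw [norm_sub_rev]
    apply Real.le_sqrt_of_sq_le
    rw [le_div_iff₀ hα]
    nlinarith [hfh, hsq]
  -- diameter facts
  have hD0 : 0 ≤ D := by
    have := hD.2 ⟨(xb, xb), ⟨hxb, hxb⟩, rfl⟩
    simpa using this
  have hxD : ∀ x ∈ X, ‖x - xb‖ ≤ D := fun x hx => hD.2 ⟨(xb, x), ⟨hxb, hx⟩, rfl⟩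
  -- the main pointwise inequality
  have key : ∀ x ∈ X, ∀ y ∈ Y,
      f (yh, xb) - (ε + M₁ * D * Real.sqrt (2 * ε / α))
        + ⟪gradient (fun x' => f (yh, x')) xb, x - xb⟫ ≤ f (y, x) := by
    intro x hx y hy
    apply le_of_forall_Ioo (c := M₁ * ‖y - yb‖ * D)
    intro t ht
    have hzY : (1 - t) • yb + t • y ∈ Y :=
      hYcv hybY hy (by linarith [ht.2]) ht.1.le (by ring)
    set z := (1 - t) • yb + t • y with hzdef
    have hdz := hdiff (z, xb) ⟨hzY, hxb⟩
    have hsub := convexOn_fderiv_le hconv (show (z, xb) ∈ Y ×ˢ X from ⟨hzY, hxb⟩)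
      (show (y, x) ∈ Y ×ˢ X from ⟨hy, hx⟩) hdz
    have hsplit : fderiv ℝ f (z, xb) ((y, x) - (z, xb))
        = ⟪gradient (fun y' => f (y', xb)) z, y - z⟫
          + ⟪gradient (fun x' => f (z, x')) xb, x - xb⟫ := by
      rw [inner_grad_fst f z xb hdz, inner_grad_snd f z xb hdz, ← map_add]
      congr 1
      simp [Prod.ext_iff]
    rw [hsplit] at hsub
    -- the y-part is nonnegative
    have e1 : yb - z = -(t • (y - yb)) := by rw [hzdef]; module
    have s1 := hsc z hzY yb hybY
    rw [e1, inner_neg_right, real_inner_smul_right] at s1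
    have n1 : ‖-(t • (y - yb))‖ = t * ‖y - yb‖ := by
      rw [norm_neg, norm_smul, Real.norm_eq_abs, abs_of_pos ht.1]
    rw [n1] at s1
    have hm := hminr z hzY
    have hIt : t * 0 ≤ t * ⟪gradient (fun y' => f (y', xb)) z, y - yb⟫ := by
      nlinarith [s1, hm, mul_nonneg hα.le (sq_nonneg (t * ‖y - yb‖))]
    have hI : (0:ℝ) ≤ ⟪gradient (fun y' => f (y', xb)) z, y - yb⟫ :=
      le_of_mul_le_mul_left hIt ht.1
    have e2 : y - z = (1 - t) • (y - yb) := by rw [hzdef]; module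
    have hy_part : 0 ≤ ⟪gradient (fun y' => f (y', xb)) z, y - z⟫ := by
      rw [e2, real_inner_smul_right]
      exact mul_nonneg (by linarith [ht.2]) hI
    -- the x-part
    set gx := gradient (fun x' => f (yh, x')) xb with hgx
    set gz := gradient (fun x' => f (z, x')) xb with hgz
    have hlz : ‖gz - gx‖ ≤ M₁ * ‖z - yh‖ := hlip yh hyh z hzY
    have hzyh : ‖z - yh‖ ≤ Real.sqrt (2 * ε / α) + t * ‖y - yb‖ := by
      have e3 : z - yh = (yb - yh) + t • (y - yb) := by rw [hzdef]; module
      calc ‖z - yh‖ ≤ ‖yb - yh‖ + ‖t • (y - yb)‖ := by rw [e3]; exact norm_add_le _ _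
        _ ≤ Real.sqrt (2 * ε / α) + t * ‖y - yb‖ := by
            rw [norm_smul, Real.norm_eq_abs, abs_of_pos ht.1]; linarith [hdist]
    have hxd := hxD x hx
    have h2 : ‖gz - gx‖ * ‖x - xb‖
        ≤ M₁ * D * Real.sqrt (2 * ε / α) + t * (M₁ * ‖y - yb‖ * D) := by
      calc ‖gz - gx‖ * ‖x - xb‖ ≤ (M₁ * ‖z - yh‖) * D :=
            mul_le_mul hlz hxd (norm_nonneg _) (mul_nonneg hM₁ (norm_nonneg _))
        _ ≤ M₁ * (Real.sqrt (2 * ε / α) + t * ‖y - yb‖) * D :=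
            mul_le_mul_of_nonneg_right (mul_le_mul_of_nonneg_left hzyh hM₁) hD0
        _ = M₁ * D * Real.sqrt (2 * ε / α) + t * (M₁ * ‖y - yb‖ * D) := by ring
    have hip : -(M₁ * D * Real.sqrt (2 * ε / α) + t * (M₁ * ‖y - yb‖ * D))
        ≤ ⟪gz - gx, x - xb⟫ := by
      have h3 := abs_real_inner_le_norm (gz - gx) (x - xb)
      exact le_trans (neg_le_neg (h3.trans h2)) (neg_abs_le _)
    have hsplit2 : ⟪gz, x - xb⟫ = ⟪gx, x - xb⟫ + ⟪gz - gx, x - xb⟫ := by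
      rw [inner_sub_left]; ring
    rw [hsplit2] at hsub
    linarith [hsub, hy_part, hip, hm, hfh]
  constructor
  · intro x hx
    simp only [Qfix]
    refine le_iInf₂ fun y hy => ?_
    exact EReal.coe_le_coe_iff.mpr (key x hx y hy)
  · refine (iInf₂_le yh hyh : Qfix Y f xb ≤ ((f (yh, xb) : ℝ) : EReal)).trans
      (EReal.coe_le_coe_iff.mpr ?_)
    have h0 : ⟪gradient (fun x' => f (yh, x')) xb, xb - xb⟫ = (0:ℝ) := by
      rw [sub_self]; exact inner_zero_right _
    rw [h0]
    linarith
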